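/- arXiv:2504.14158 — 3 statements merged into one kernel-verified Lean document; each statement's English description precedes it below -/
import Mathlib

section
/- Let Θ, Ψ be convex and closed sets of effects on a finite-dimensional Hilbert space with Ψ nonempty. Then Θ ≼_ang Ψ (for all density operators ρ, sup_{M∈Θ} tr(Mρ) ≤ sup_{N∈Ψ} tr(Nρ)) if and only if Θ ≤_H Ψ (for every M ∈ Θ there exists N ∈ Ψ with M ⊑ N). -/
open Matrix
open scoped ComplexOrder

noncomputable section

/-- Löwner order: `A ⊑ B` iff `B - A` is positive semidefinite. -/
def Loewner {d : Type*} [Fintype d] (A B : Matrix d d ℂ) : Prop :=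
  (B - A).PosSemidef

/-- An effect: a positive semidefinite operator bounded above by the identity. -/
def IsEffect {d : Type*} [Fintype d] [DecidableEq d] (M : Matrix d d ℂ) : Prop :=
  M.PosSemidef ∧ (1 - M).PosSemidef

/-- A (partial) density operator: positive semidefinite with trace at most 1. -/
def IsDensity {d : Type*} [Fintype d] (ρ : Matrix d d ℂ) : Prop :=
  ρ.PosSemidef ∧ ρ.trace.re ≤ 1

/-- An orthogonal projector: Hermitian idempotent. -/
def IsProj {d : Type*} [Fintype d] (P : Matrix d d ℂ) : Prop :=
  P.IsHermitian ∧ P * P = P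

-- Demonic expectation: `inf_{M ∈ Θ} tr(M ρ)`, with the convention that the
-- infimum over the empty set is `tr ρ`.
open Classical in
def demExp {d : Type*} [Fintype d] (Θ : Set (Matrix d d ℂ)) (ρ : Matrix d d ℂ) : ℝ :=
  if Θ = ∅ then ρ.trace.re else sInf ((fun M => (M * ρ).trace.re) '' Θ)

/-- Angelic expectation: `sup_{M ∈ Θ} tr(M ρ)`; note `sSup ∅ = 0` in `ℝ`,
matching the convention that the supremum over the empty set is `0`. -/
def angExp {d : Type*} [Fintype d] (Θ : Set (Matrix d d ℂ)) (ρ : Matrix d d ℂ) : ℝ :=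
  sSup ((fun M => (M * ρ).trace.re) '' Θ)

/-- The extension `I_{Fin m} ⊗ Φ` of a super-operator `Φ`, acting blockwise. -/
def tensorMap {n : ℕ} (Φ : Matrix (Fin n) (Fin n) ℂ → Matrix (Fin n) (Fin n) ℂ) (m : ℕ)
    (A : Matrix (Fin m × Fin n) (Fin m × Fin n) ℂ) :
    Matrix (Fin m × Fin n) (Fin m × Fin n) ℂ :=
  fun p q => Φ (Matrix.of fun a b => A (p.1, a) (q.1, b)) p.2 q.2

/-- Complete positivity: every extension `I_K ⊗ Φ` maps positive semidefinite
matrices to positive semidefinite matrices. -/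
def IsCP {n : ℕ} (Φ : Matrix (Fin n) (Fin n) ℂ → Matrix (Fin n) (Fin n) ℂ) : Prop :=
  ∀ (m : ℕ) (A : Matrix (Fin m × Fin n) (Fin m × Fin n) ℂ),
    A.PosSemidef → (tensorMap Φ m A).PosSemidef

/-- Trace-nonincreasing on positive operators. -/
def IsTNI {n : ℕ} (Φ : Matrix (Fin n) (Fin n) ℂ → Matrix (Fin n) (Fin n) ℂ) : Prop :=
  ∀ A : Matrix (Fin n) (Fin n) ℂ, A.PosSemidef → (Φ A).trace.re ≤ A.trace.re

/-- Trace-preserving on positive operators. -/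
def IsTP {n : ℕ} (Φ : Matrix (Fin n) (Fin n) ℂ → Matrix (Fin n) (Fin n) ℂ) : Prop :=
  ∀ A : Matrix (Fin n) (Fin n) ℂ, A.PosSemidef → (Φ A).trace = A.trace

/-- CPTN super-operator: linear, completely positive, and trace-nonincreasing. -/
def IsCPTN {n : ℕ} (Φ : Matrix (Fin n) (Fin n) ℂ → Matrix (Fin n) (Fin n) ℂ) : Prop :=
  IsLinearMap ℂ Φ ∧ IsCP Φ ∧ IsTNI Φ

/-- The Choi matrix `J(Φ) = (Φ ⊗ I)(Ω)` of `Φ`, where `Ω` is the maximally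
entangled state on `H ⊗ H`. -/
def choi {n : ℕ} (Φ : Matrix (Fin n) (Fin n) ℂ → Matrix (Fin n) (Fin n) ℂ) :
    Matrix (Fin n × Fin n) (Fin n × Fin n) ℂ :=
  fun p q => (1 / (n : ℂ)) * Φ (Matrix.single p.2 q.2 1) p.1 q.1



section Helpers

variable {d : Type*} [Fintype d] [DecidableEq d]

instance : LocallyConvexSpace ℝ (Matrix d d ℂ) :=
  (inferInstance : LocallyConvexSpace ℝ (d → d → ℂ))

lemma psd_trace_nonneg' {A : Matrix d d ℂ} (hA : A.PosSemidef) : 0 ≤ A.trace := by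
  rw [Matrix.trace]
  apply Finset.sum_nonneg
  intro i _
  have := hA.dotProduct_mulVec_nonneg (Pi.single i 1)
  simpa [dotProduct, Matrix.mulVec, Pi.single_apply] using this

lemma psd_trace_mul_nonneg' {A B : Matrix d d ℂ} (hA : A.PosSemidef) (hB : B.PosSemidef) :
    0 ≤ (A * B).trace := by
  obtain ⟨C, rfl⟩ : ∃ C : Matrix d d ℂ, A = Cᴴ * C := by
    open scoped MatrixOrder in exact CStarAlgebra.nonneg_iff_eq_star_mul_self.mp hA.nonneg
  have h1 : (Cᴴ * C * B).trace = (C * B * Cᴴ).trace := by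
    rw [mul_assoc, Matrix.trace_mul_comm]
  rw [h1]
  exact psd_trace_nonneg' (hB.mul_mul_conjTranspose_same C)

lemma trace_mul_re_mono' {M N ρ : Matrix d d ℂ} (h : (N - M).PosSemidef) (hρ : ρ.PosSemidef) :
    (M * ρ).trace.re ≤ (N * ρ).trace.re := by
  have := psd_trace_mul_nonneg' h hρ
  rw [Matrix.sub_mul, Matrix.trace_sub] at this
  have := (Complex.le_def.mp this).1
  simp at this
  linarith

lemma trace_mul_re_nonneg' {M ρ : Matrix d d ℂ} (hM : M.PosSemidef) (hρ : ρ.PosSemidef) :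
    0 ≤ (M * ρ).trace.re := by
  have := (Complex.le_def.mp (psd_trace_mul_nonneg' hM hρ)).1
  simpa using this

lemma continuous_entry' (i j : d) : Continuous fun A : Matrix d d ℂ => A i j :=
  (continuous_apply j).comp (continuous_apply i)

lemma continuous_quad' (x : d → ℂ) :
    Continuous fun A : Matrix d d ℂ => dotProduct (star x) (A *ᵥ x) := by
  simp only [dotProduct, Matrix.mulVec]
  refine continuous_finset_sum _ fun i _ => ?_
  refine (continuous_const.mul ?_)
  exact continuous_finset_sum _ fun j _ => (continuous_entry' i j).mul continuous_const

lemma isClosed_psd' : IsClosed {A : Matrix d d ℂ | A.PosSemidef} := by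
  have : {A : Matrix d d ℂ | A.PosSemidef} =
      {A : Matrix d d ℂ | Aᴴ = A} ∩ ⋂ x : d → ℂ,
        {A : Matrix d d ℂ | 0 ≤ dotProduct (star x) (A *ᵥ x)} := by
    ext A
    simp only [Set.mem_setOf_eq, Set.mem_inter_iff, Set.mem_iInter]
    exact ⟨fun h => ⟨h.1, h.dotProduct_mulVec_nonneg⟩, fun h => .of_dotProduct_mulVec_nonneg h.1 h.2⟩
  rw [this]
  refine IsClosed.inter ?_ (isClosed_iInter fun x => ?_)
  · have : Continuous fun A : Matrix d d ℂ => Aᴴ - A := by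
      refine continuous_pi fun i => continuous_pi fun j => ?_
      exact (Complex.continuous_conj.comp (continuous_entry' j i)).sub (continuous_entry' i j)
    have h2 : {A : Matrix d d ℂ | Aᴴ = A} = (fun A : Matrix d d ℂ => Aᴴ - A) ⁻¹' {0} := by
      ext A; simp [sub_eq_zero]
    rw [h2]
    exact IsClosed.preimage this isClosed_singleton
  · have : {A : Matrix d d ℂ | 0 ≤ dotProduct (star x) (A *ᵥ x)} =
        (fun A : Matrix d d ℂ => dotProduct (star x) (A *ᵥ x)) ⁻¹' {z : ℂ | 0 ≤ z} := rfl
    rw [this]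
    refine IsClosed.preimage (continuous_quad' x) ?_
    have : {z : ℂ | 0 ≤ z} = Complex.re ⁻¹' (Set.Ici 0) ∩ Complex.im ⁻¹' {0} := by
      ext z
      simp [Complex.le_def, eq_comm]
    rw [this]
    exact (IsClosed.preimage Complex.continuous_re isClosed_Ici).inter
      (IsClosed.preimage Complex.continuous_im isClosed_singleton)

lemma star_pi_single' (i : d) : star (Pi.single i (1:ℂ)) = (Pi.single i 1 : d → ℂ) := by
  ext k
  simp [Pi.single_apply, apply_ite]

lemma quad_base' (M : Matrix d d ℂ) (a b : d) :
    dotProduct (Pi.single a (1:ℂ)) (M *ᵥ (Pi.single b 1 : d → ℂ)) = M a b := by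
  rw [Matrix.mulVec_single, single_dotProduct]
  simp

lemma quad_expand' (M : Matrix d d ℂ) (i j : d) (c : ℂ) :
    dotProduct (star ((Pi.single i 1 : d → ℂ) + c • (Pi.single j 1 : d → ℂ)))
      (M *ᵥ ((Pi.single i 1 : d → ℂ) + c • (Pi.single j 1 : d → ℂ))) =
    M i i + c * M i j + (starRingEnd ℂ) c * M j i + (starRingEnd ℂ) c * c * M j j := by
  rw [star_add, star_smul, star_pi_single', star_pi_single', Matrix.mulVec_add,
    Matrix.mulVec_smul, dotProduct_add, add_dotProduct, add_dotProduct,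
    dotProduct_smul, dotProduct_smul, smul_dotProduct,
    smul_dotProduct, quad_base', quad_base', quad_base', quad_base']
  simp [smul_eq_mul]
  ring

lemma psd_diag_nonneg' {M : Matrix d d ℂ} (hM : M.PosSemidef) (i : d) : 0 ≤ M i i := by
  have := hM.dotProduct_mulVec_nonneg (Pi.single i 1)
  rwa [star_pi_single', quad_base'] at this

lemma effect_diag_re_le_one' {M : Matrix d d ℂ} (h1 : (1 - M).PosSemidef) (i : d) :
    (M i i).re ≤ 1 := by
  have := psd_diag_nonneg' h1 i
  have h2 : ((1 - M : Matrix d d ℂ)) i i = 1 - M i i := by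
    simp [Matrix.sub_apply, Matrix.one_apply]
  rw [h2] at this
  have := (Complex.le_def.mp this).1
  simp at this
  linarith

lemma effect_entry_norm_le' {M : Matrix d d ℂ} (hM : M.PosSemidef) (h1 : (1 - M).PosSemidef)
    (i j : d) : ‖M i j‖ ≤ 1 := by
  by_cases hij : i = j
  · subst hij
    have h0 := psd_diag_nonneg' hM i
    have hre := (Complex.le_def.mp h0).1
    have him := (Complex.le_def.mp h0).2
    simp only [Complex.zero_re, Complex.zero_im] at hre him
    have : M i i = ((M i i).re : ℂ) := Complex.ext rfl him.symm
    rw [this]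
    rw [Complex.norm_real, Real.norm_eq_abs, abs_of_nonneg hre]
    exact effect_diag_re_le_one' h1 i
  · set z := M i j with hz
    by_cases hz0 : z = 0
    · simp [hz0]
    · set c : ℂ := -(‖z‖ : ℂ) / z with hc
      have hcz : c * z = -‖z‖ := by
        rw [hc, div_mul_cancel₀ _ hz0]
      have hji : M j i = (starRingEnd ℂ) z := by
        have := hM.1
        rw [Matrix.IsHermitian] at this
        have := congrFun (congrFun this j) i
        simpa [Matrix.conjTranspose_apply] using this.symm
      have habs : ‖c‖ = 1 := by
        rw [hc, norm_div, norm_neg, Complex.norm_real, norm_norm, div_self (by simpa using hz0)]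
      have hcc : (starRingEnd ℂ) c * c = 1 := by
        have h2 : (starRingEnd ℂ) c * c = (Complex.normSq c : ℂ) := by
          rw [Complex.normSq_eq_conj_mul_self]
        rw [h2, Complex.normSq_eq_norm_sq, habs]
        norm_num
      have hq := hM.dotProduct_mulVec_nonneg ((Pi.single i 1 : d → ℂ) + c • (Pi.single j 1 : d → ℂ))
      rw [quad_expand'] at hq
      have hcMij : c * M i j = -‖z‖ := hcz
      have hconj : (starRingEnd ℂ) c * M j i = -‖z‖ := by
        rw [hji, ← RingHom.map_mul (starRingEnd ℂ) c z, hcz]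
        simp
      rw [hcMij, hconj] at hq
      have hjj : (starRingEnd ℂ) c * c * M j j = M j j := by rw [hcc, one_mul]
      rw [hjj] at hq
      have hre := (Complex.le_def.mp hq).1
      simp only [Complex.zero_re, Complex.add_re, Complex.neg_re, Complex.ofReal_re] at hre
      have h1i := effect_diag_re_le_one' h1 i
      have h1j := effect_diag_re_le_one' h1 j
      linarith

lemma isCompact_effects_subset' (Ψ : Set (Matrix d d ℂ)) (hcl : IsClosed Ψ)
    (he : ∀ N ∈ Ψ, N.PosSemidef ∧ (1 - N).PosSemidef) : IsCompact Ψ := by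
  have hbox : IsCompact {A : Matrix d d ℂ | ∀ i j, ‖A i j‖ ≤ 1} := by
    have : {A : Matrix d d ℂ | ∀ i j, ‖A i j‖ ≤ 1} =
        Set.pi Set.univ (fun _ : d => Set.pi Set.univ
          (fun _ : d => Metric.closedBall (0:ℂ) 1)) := by
      ext A
      simp only [Set.mem_setOf_eq]
      constructor
      · intro h
        refine Set.mem_pi.mpr ?_
        intro i _
        rw [Set.mem_pi]
        intro j _
        simpa [dist_zero_right] using h i j
      · intro h i j
        replace h := Set.mem_pi.mp h
        have h2 := h i trivial
        rw [Set.mem_pi] at h2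
        have h3 := h2 j trivial
        simpa [dist_zero_right] using h3
    rw [this]
    exact isCompact_univ_pi fun i => isCompact_univ_pi fun j =>
      ProperSpace.isCompact_closedBall 0 1
  exact hbox.of_isClosed_subset hcl
    (fun N hN => fun i j => effect_entry_norm_le' (he N hN).1 (he N hN).2 i j)

lemma repr_functional' (f : Matrix d d ℂ →L[ℝ] ℝ) :
    ∃ C : Matrix d d ℂ, ∀ A : Matrix d d ℂ, f A = ((A * C).trace).re := by
  set c : d → d → ℂ := fun i j =>
    (f (Matrix.single i j 1) : ℂ) +
      Complex.I * (f (Complex.I • Matrix.single i j 1) : ℂ) with hc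
  refine ⟨Matrix.of fun p q => (starRingEnd ℂ) (c q p), fun A => ?_⟩
  have htr : ((A * Matrix.of fun p q => (starRingEnd ℂ) (c q p)).trace).re =
      ∑ i, ∑ j, (A i j * (starRingEnd ℂ) (c i j)).re := by
    rw [Matrix.trace, Complex.re_sum]
    refine Finset.sum_congr rfl fun i _ => ?_
    rw [Matrix.diag_apply, Matrix.mul_apply, Complex.re_sum]
    rfl
  rw [htr]
  have hA : A = ∑ i, ∑ j, A i j • Matrix.single i j (1:ℂ) := by
    conv_lhs => rw [matrix_eq_sum_single A]
    refine Finset.sum_congr rfl fun i _ => Finset.sum_congr rfl fun j _ => ?_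
    rw [smul_single, smul_eq_mul, mul_one]
  conv_lhs => rw [hA]
  rw [map_sum]
  refine Finset.sum_congr rfl fun i _ => ?_
  rw [map_sum]
  refine Finset.sum_congr rfl fun j _ => ?_
  have hsplit : A i j • Matrix.single i j (1:ℂ) =
      (A i j).re • Matrix.single i j (1:ℂ) +
        (A i j).im • (Complex.I • Matrix.single i j (1:ℂ)) := by
    have h1 : A i j = ((A i j).re : ℂ) + ((A i j).im : ℂ) * Complex.I :=
      (Complex.re_add_im _).symm
    rw [← algebraMap_smul ℂ ((A i j).re) (Matrix.single i j (1:ℂ)),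
      ← algebraMap_smul ℂ ((A i j).im) (Complex.I • Matrix.single i j (1:ℂ)),
      smul_smul, ← add_smul, Complex.coe_algebraMap, ← h1]
  rw [hsplit]
  simp only [map_add, _root_.map_smul]
  rw [hc]
  simp only [smul_eq_mul, Complex.mul_re, map_add, Complex.conj_re, Complex.conj_im,
    Complex.add_re, Complex.add_im, Complex.ofReal_re, Complex.ofReal_im, Complex.mul_im,
    Complex.I_re, Complex.I_im]
  ring

lemma psd_real_smul' {σ : Matrix d d ℂ} (hσ : σ.PosSemidef) {t : ℝ} (ht : 0 ≤ t) :
    (t • σ).PosSemidef := by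
  refine .of_dotProduct_mulVec_nonneg ?_ ?_
  · rw [Matrix.IsHermitian, Matrix.conjTranspose_smul]
    rw [hσ.1, star_trivial]
  · intro x
    have h0 := hσ.dotProduct_mulVec_nonneg x
    have : (t • σ) *ᵥ x = t • (σ *ᵥ x) := by
      ext i
      simp [Matrix.mulVec, dotProduct, Finset.smul_sum, smul_comm]
      exact Finset.sum_congr rfl fun j _ => by ring
    rw [this]
    have h2 : dotProduct (star x) (t • (σ *ᵥ x)) =
        t • dotProduct (star x) (σ *ᵥ x) := by
      simp [dotProduct, Finset.smul_sum, smul_comm, mul_comm]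
      ring_nf
    rw [h2]
    rw [Complex.le_def] at h0 ⊢
    constructor
    · have : (t • dotProduct (star x) (σ *ᵥ x)).re =
          t * (dotProduct (star x) (σ *ᵥ x)).re := by
        rw [Complex.real_smul, Complex.mul_re]
        simp
      rw [this]
      simp only [Complex.zero_re] at h0 ⊢
      exact mul_nonneg ht h0.1
    · have : (t • dotProduct (star x) (σ *ᵥ x)).im =
          t * (dotProduct (star x) (σ *ᵥ x)).im := by
        rw [Complex.real_smul, Complex.mul_im]
        simp
      rw [this]
      simp only [Complex.zero_im] at h0 ⊢
      rw [← h0.2]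
      ring

lemma psd_vecMulVec' (x : d → ℂ) : (Matrix.vecMulVec x (star x)).PosSemidef := by
  have : Matrix.vecMulVec x (star x) = Matrix.replicateCol (Fin 1) x * (Matrix.replicateCol (Fin 1) x)ᴴ := by
    rw [Matrix.conjTranspose_replicateCol, Matrix.vecMulVec_eq (Fin 1)]
    rfl
  rw [this]
  exact Matrix.posSemidef_self_mul_conjTranspose _

lemma quad_eq_trace' (σ : Matrix d d ℂ) (x : d → ℂ) :
    dotProduct (star x) (σ *ᵥ x) = (σ * Matrix.vecMulVec x (star x)).trace := by
  rw [Matrix.trace]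
  simp only [Matrix.diag_apply, Matrix.mul_apply, Matrix.vecMulVec_apply,
    dotProduct, Matrix.mulVec, Pi.star_apply]
  refine Finset.sum_congr rfl fun i _ => ?_
  rw [Finset.mul_sum]
  refine Finset.sum_congr rfl fun j _ => ?_
  ring

lemma trace_conjTranspose_re' (A C : Matrix d d ℂ) (hA : A.IsHermitian) :
    ((A * Cᴴ).trace).re = ((A * C).trace).re := by
  have h1 : (A * Cᴴ).trace = star ((A * C).trace) := by
    rw [← Matrix.trace_conjTranspose, Matrix.conjTranspose_mul, hA.eq, Matrix.trace_mul_comm]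
  rw [h1]
  simp [Complex.conj_re]

lemma herm_quad_real' {σ : Matrix d d ℂ} (hσ : σ.IsHermitian) (x : d → ℂ) :
    (dotProduct (star x) (σ *ᵥ x)).im = 0 := by
  have h2 := Matrix.star_dotProduct_star (v := σ *ᵥ x) (w := star x)
  rw [star_star] at h2
  have h1 : star (dotProduct (star x) (σ *ᵥ x)) =
      dotProduct (star x) (σ *ᵥ x) := by
    rw [← h2, Matrix.star_mulVec, hσ.eq, ← dotProduct_mulVec]
  have h3 := congrArg Complex.im h1
  simp only [Complex.star_def, Complex.conj_im] at h3
  linarith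

lemma psd_of_herm_re' {σ : Matrix d d ℂ} (hσ : σ.IsHermitian)
    (h : ∀ x : d → ℂ, 0 ≤ (dotProduct (star x) (σ *ᵥ x)).re) : σ.PosSemidef := by
  refine .of_dotProduct_mulVec_nonneg hσ fun x => ?_
  rw [Complex.le_def]
  simp only [Complex.zero_re, Complex.zero_im]
  exact ⟨h x, (herm_quad_real' hσ x).symm⟩

end Helpers


theorem ang_iff_hoare {n : ℕ} (Θ Ψ : Set (Matrix (Fin n) (Fin n) ℂ))
    (hΘe : ∀ M ∈ Θ, IsEffect M) (hΨe : ∀ N ∈ Ψ, IsEffect N)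
    (hΘcv : Convex ℝ Θ) (hΨcv : Convex ℝ Ψ)
    (hΘcl : IsClosed Θ) (hΨcl : IsClosed Ψ)
    (hne : Ψ.Nonempty) :
    (∀ ρ : Matrix (Fin n) (Fin n) ℂ, IsDensity ρ → angExp Θ ρ ≤ angExp Ψ ρ) ↔
      (∀ M ∈ Θ, ∃ N ∈ Ψ, Loewner M N) := by
  constructor
  · -- hard direction
    intro hang M hMθ
    by_contra hno
    push_neg at hno
    set s : Set (Matrix (Fin n) (Fin n) ℂ) := {A | A.PosSemidef} with hs
    set t : Set (Matrix (Fin n) (Fin n) ℂ) := (fun N => N - M) '' Ψ with ht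
    have hscv : Convex ℝ s := by
      intro P hP Q hQ a b ha hb hab
      exact (psd_real_smul' hP ha).add (psd_real_smul' hQ hb)
    have hscl : IsClosed s := isClosed_psd'
    have htcv : Convex ℝ t := by
      have he : t = (fun z => -M + z) '' Ψ := by
        rw [ht]
        refine Set.image_congr fun N _ => ?_
        rw [sub_eq_neg_add]
      rw [he]
      exact hΨcv.translate (-M)
    have htcp : IsCompact t := by
      refine (isCompact_effects_subset' Ψ hΨcl fun N hN => ⟨(hΨe N hN).1, (hΨe N hN).2⟩).image ?_
      exact continuous_id.sub continuous_const
    have hdisj : Disjoint s t := by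
      rw [Set.disjoint_left]
      rintro A hA ⟨N, hN, rfl⟩
      exact hno N hN hA
    obtain ⟨f, u, v, hfu, huv, hfv⟩ :=
      geometric_hahn_banach_closed_compact hscv hscl htcv htcp hdisj
    have hu0 : 0 < u := by
      have := hfu 0 Matrix.PosSemidef.zero
      simpa using this
    have hv0 : 0 < v := lt_trans hu0 huv
    have hfle : ∀ P : Matrix (Fin n) (Fin n) ℂ, P.PosSemidef → f P ≤ 0 := by
      intro P hP
      by_contra h
      push_neg at h
      have ht0 : (0:ℝ) ≤ u / f P := le_of_lt (div_pos hu0 h)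
      have h2 := hfu ((u / f P) • P) (psd_real_smul' hP ht0)
      rw [f.map_smul, smul_eq_mul, div_mul_cancel₀ _ (ne_of_gt h)] at h2
      exact lt_irrefl u h2
    obtain ⟨C, hC⟩ := repr_functional' f
    set σ : Matrix (Fin n) (Fin n) ℂ := -(C + Cᴴ) with hσdef
    have hσherm : σ.IsHermitian := by
      rw [Matrix.IsHermitian, hσdef, Matrix.conjTranspose_neg, Matrix.conjTranspose_add,
        Matrix.conjTranspose_conjTranspose, add_comm]
    have htrace : ∀ A : Matrix (Fin n) (Fin n) ℂ, A.IsHermitian →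
        ((A * σ).trace).re = -(2 * f A) := by
      intro A hA
      have h1 : A * σ = -(A * C + A * Cᴴ) := by
        rw [hσdef, Matrix.mul_neg, Matrix.mul_add]
      rw [h1, Matrix.trace_neg, Complex.neg_re, Matrix.trace_add, Complex.add_re,
        trace_conjTranspose_re' A C hA, ← hC A]
      ring
    have hσpsd : σ.PosSemidef := by
      refine psd_of_herm_re' hσherm fun x => ?_
      rw [quad_eq_trace' σ x, Matrix.trace_mul_comm,
        htrace _ (psd_vecMulVec' x).1]
      have := hfle _ (psd_vecMulVec' x)
      linarith
    have hherm_sub : ∀ N ∈ Ψ, (N - M).IsHermitian := fun N hN =>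
      ((hΨe N hN).1.1).sub ((hΘe M hMθ).1.1)
    have hgap : ∀ N ∈ Ψ, ((N * σ).trace).re ≤ ((M * σ).trace).re - 2 * v := by
      intro N hN
      have h1 : (((N - M) * σ).trace).re = -(2 * f (N - M)) := htrace _ (hherm_sub N hN)
      have h2 : v < f (N - M) := hfv _ ⟨N, hN, rfl⟩
      have h3 : (((N - M) * σ).trace).re = ((N * σ).trace).re - ((M * σ).trace).re := by
        rw [Matrix.sub_mul, Matrix.trace_sub, Complex.sub_re]
      linarith
    have hτ : 0 ≤ σ.trace.re := by
      have := (Complex.le_def.mp (psd_trace_nonneg' hσpsd)).1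
      simpa using this
    set τ : ℝ := σ.trace.re with hτdef
    set t0 : ℝ := (τ + 1)⁻¹ with ht0def
    have ht0 : 0 < t0 := inv_pos.mpr (by linarith)
    set ρ : Matrix (Fin n) (Fin n) ℂ := t0 • σ with hρdef
    have hsmre : ∀ z : ℂ, (t0 • z).re = t0 * z.re := by
      intro z
      rw [Complex.real_smul, Complex.mul_re]
      simp
    have hρpsd : ρ.PosSemidef := psd_real_smul' hσpsd (le_of_lt ht0)
    have hρd : IsDensity ρ := by
      refine ⟨hρpsd, ?_⟩
      rw [hρdef, Matrix.trace_smul, hsmre, ← hτdef, ht0def]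
      rw [inv_mul_le_iff₀ (by linarith)]
      linarith
    have hsc : ∀ A : Matrix (Fin n) (Fin n) ℂ,
        ((A * ρ).trace).re = t0 * ((A * σ).trace).re := by
      intro A
      rw [hρdef, Matrix.mul_smul, Matrix.trace_smul, hsmre]
    have hbdd : BddAbove ((fun P => (P * ρ).trace.re) '' Θ) := by
      refine ⟨ρ.trace.re, ?_⟩
      rintro y ⟨P, hP, rfl⟩
      have h1 : ((1:Matrix (Fin n) (Fin n) ℂ) - P).PosSemidef := (hΘe P hP).2
      have := trace_mul_re_mono' h1 hρpsd
      rwa [one_mul] at this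
    have hMρ : (M * ρ).trace.re ≤ angExp Θ ρ :=
      le_csSup hbdd ⟨M, hMθ, rfl⟩
    have hsup : angExp Ψ ρ ≤ (M * ρ).trace.re - 2 * t0 * v := by
      refine csSup_le (hne.image _) ?_
      rintro y ⟨N, hN, rfl⟩
      have h1 := hgap N hN
      have h2 : t0 * ((N * σ).trace).re ≤ t0 * (((M * σ).trace).re - 2 * v) :=
        mul_le_mul_of_nonneg_left h1 (le_of_lt ht0)
      dsimp only
      rw [hsc N, hsc M]
      nlinarith
    have hcontra := hang ρ hρd
    nlinarith
  · -- easy direction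
    intro hH ρ hρ
    have hbdd : BddAbove ((fun P => (P * ρ).trace.re) '' Ψ) := by
      refine ⟨ρ.trace.re, ?_⟩
      rintro y ⟨N, hN, rfl⟩
      have h1 : ((1:Matrix (Fin n) (Fin n) ℂ) - N).PosSemidef := (hΨe N hN).2
      have := trace_mul_re_mono' h1 hρ.1
      rwa [one_mul] at this
    apply Real.sSup_le
    · rintro y ⟨P, hP, rfl⟩
      obtain ⟨N, hN, hMN⟩ := hH P hP
      exact le_trans (trace_mul_re_mono' hMN hρ.1) (le_csSup hbdd ⟨N, hN, rfl⟩)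
    · obtain ⟨N0, hN0⟩ := hne
      exact le_trans (trace_mul_re_nonneg' (hΨe N0 hN0).1 hρ.1) (le_csSup hbdd ⟨N0, hN0, rfl⟩)
end
end

section
/- Let E be a CPTN super-operator on L(H) and Q an orthogonal projector on H. The largest projector P (under Löwner order) satisfying P ⊑ E†(Q) is the eigenspace E(E†(Q)) of E†(Q) for eigenvalue 1; the largest projector P satisfying P ⊑ I − E†(I − Q) is the kernel of E†(Q⊥); and the smallest projector R such that supp(E(ρ)) ⊆ R for all partial density operators ρ with supp(ρ) ⊆ Q is supp(E(Q)). -/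
open Matrix
open scoped ComplexOrder

noncomputable section

set_option linter.unusedSectionVars false
set_option maxHeartbeats 1000000

section Helpers

variable {m : Type*} [Fintype m] [DecidableEq m]

private lemma mulVec_ext' {M N : Matrix m m ℂ}
    (h : ∀ v, M.mulVec v = N.mulVec v) : M = N := by
  ext i j
  have := congrFun (h (Pi.single j 1)) i
  simpa [Matrix.mulVec_single] using this

private lemma psd_of_forall (M : Matrix m m ℂ)
    (h : ∀ v, 0 ≤ star v ⬝ᵥ M.mulVec v) : M.PosSemidef := by
  have herm : M.IsHermitian := by
    rw [Matrix.isHermitian_iff_isSymmetric, LinearMap.isSymmetric_iff_inner_map_self_real]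
    rw [(WithLp.equiv 2 (m → ℂ)).symm.surjective.forall]
    intro v
    simp only [WithLp.equiv_symm_apply, Matrix.toEuclideanLin_toLp, EuclideanSpace.inner_toLp_toLp,
      Matrix.toLin'_apply]
    rw [dotProduct_comm]
    have h0 : star (M.mulVec v) ⬝ᵥ v = starRingEnd ℂ (star v ⬝ᵥ M.mulVec v) := by
      simp [dotProduct, Complex.conj_eq_iff_im, map_sum, mul_comm]
    have him : (star v ⬝ᵥ M.mulVec v).im = 0 := by
      have := h v
      rw [Complex.le_def] at this
      simpa using this.2.symm
    rw [h0, Complex.conj_conj]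
    exact (Complex.conj_eq_iff_im.mpr him).symm
  exact Matrix.PosSemidef.of_dotProduct_mulVec_nonneg herm h

/-- outer product vvᴴ -/
private def outer (v : m → ℂ) : Matrix m m ℂ := Matrix.vecMulVec v (star v)

private lemma outer_psd (v : m → ℂ) : (outer v).PosSemidef := by
  refine Matrix.PosSemidef.of_dotProduct_mulVec_nonneg ?_ ?_
  · ext i j
    simp [outer, Matrix.vecMulVec_apply, mul_comm]
  · intro x
    have : star x ⬝ᵥ (outer v).mulVec x = star (star v ⬝ᵥ x) * (star v ⬝ᵥ x) := by
      simp only [outer, dotProduct, Matrix.mulVec, Matrix.vecMulVec_apply,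
        Pi.star_apply, star_sum, star_mul', star_star, Finset.mul_sum, Finset.sum_mul]
      rw [Finset.sum_comm]
      apply Finset.sum_congr rfl; intro i _
      apply Finset.sum_congr rfl; intro j _
      ring
    rw [this]
    exact star_mul_self_nonneg _

private lemma trace_mul_outer (M : Matrix m m ℂ) (v : m → ℂ) :
    (M * outer v).trace = star v ⬝ᵥ M.mulVec v := by
  simp only [Matrix.trace, Matrix.diag, Matrix.mul_apply, outer, Matrix.vecMulVec_apply,
    dotProduct, Matrix.mulVec, Pi.star_apply]
  apply Finset.sum_congr rfl; intro i _
  rw [Finset.mul_sum]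
  apply Finset.sum_congr rfl; intro j _
  ring

private lemma trace_outer (v : m → ℂ) : (outer v).trace = star v ⬝ᵥ v := by
  simp [Matrix.trace, Matrix.diag, outer, Matrix.vecMulVec_apply, dotProduct, mul_comm]

private lemma psd_diag_nonneg {A : Matrix m m ℂ} (hA : A.PosSemidef) (i : m) :
    0 ≤ A i i := by
  have h2 := hA.dotProduct_mulVec_nonneg (Pi.single i 1)
  simpa [Matrix.mulVec_single, dotProduct, Pi.single_apply, apply_ite] using h2

private lemma trace_mul_psd_nonneg {A B : Matrix m m ℂ} (hA : A.PosSemidef)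
    (hB : B.PosSemidef) : 0 ≤ (A * B).trace := by
  obtain ⟨X, rfl⟩ := (by open scoped MatrixOrder in obtain ⟨B, hB⟩ := CStarAlgebra.nonneg_iff_eq_star_mul_self.mp hA.nonneg; exact ⟨B, hB⟩ : ∃ B : Matrix m m ℂ, A = Bᴴ * B)
  obtain ⟨Y, rfl⟩ := (by open scoped MatrixOrder in obtain ⟨B', hB'⟩ := CStarAlgebra.nonneg_iff_eq_star_mul_self.mp hB.nonneg; exact ⟨B', hB'⟩ : ∃ B' : Matrix m m ℂ, B = B'ᴴ * B')
  have h1 : (Xᴴ * X * (Yᴴ * Y)).trace = ((X * Yᴴ) * (X * Yᴴ)ᴴ).trace := by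
    calc (Xᴴ * X * (Yᴴ * Y)).trace = (Xᴴ * (X * Yᴴ * Y)).trace := by
          simp only [Matrix.mul_assoc]
      _ = ((X * Yᴴ * Y) * Xᴴ).trace := Matrix.trace_mul_comm _ _
      _ = ((X * Yᴴ) * (Y * Xᴴ)).trace := by rw [Matrix.mul_assoc]
      _ = ((X * Yᴴ) * (X * Yᴴ)ᴴ).trace := by
          rw [Matrix.conjTranspose_mul, Matrix.conjTranspose_conjTranspose]
  rw [h1, Matrix.trace]
  exact Finset.sum_nonneg fun i _ =>
    psd_diag_nonneg (Matrix.posSemidef_self_mul_conjTranspose (X * Yᴴ)) i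

private lemma psd_trace_eq_zero {A : Matrix m m ℂ} (hA : A.PosSemidef)
    (h : A.trace = 0) : A = 0 := by
  obtain ⟨X, rfl⟩ := (by open scoped MatrixOrder in obtain ⟨B, hB⟩ := CStarAlgebra.nonneg_iff_eq_star_mul_self.mp hA.nonneg; exact ⟨B, hB⟩ : ∃ B : Matrix m m ℂ, A = Bᴴ * B)
  have hX : X = 0 := by
    ext i j
    have hdiag : ∀ k, (Xᴴ * X) k k = star (fun l => X l k) ⬝ᵥ (fun l => X l k) := by
      intro k
      simp [Matrix.mul_apply, dotProduct, Matrix.conjTranspose_apply]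
    have hnn : ∀ k ∈ Finset.univ, (0:ℂ) ≤ (Xᴴ * X) k k := by
      intro k _
      rw [hdiag k]
      exact dotProduct_star_self_nonneg _
    have hz : ∀ k ∈ (Finset.univ : Finset m), (Xᴴ * X) k k = 0 := by
      rw [← Finset.sum_eq_zero_iff_of_nonneg hnn]
      exact h
    have h3 := hz j (Finset.mem_univ j)
    rw [hdiag j] at h3
    exact congrFun (dotProduct_star_self_eq_zero.mp h3) i
  rw [hX]; simp

private lemma proj_psd {P : Matrix m m ℂ} (hP : IsProj P) : P.PosSemidef := by
  have : P = Pᴴ * P := by rw [hP.1.eq, hP.2]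
  rw [this]
  exact Matrix.posSemidef_conjTranspose_mul_self P

private lemma proj_compl {P : Matrix m m ℂ} (hP : IsProj P) : IsProj (1 - P) := by
  constructor
  · exact (Matrix.isHermitian_one).sub hP.1
  · rw [sub_mul, one_mul, mul_sub, mul_one, hP.2]
    simp

/-- If A is PSD and A * P = P with P a projector, then A - P is PSD. -/
private lemma proj_le {A P : Matrix m m ℂ} (hA : A.PosSemidef) (hP : IsProj P)
    (hfix : A * P = P) : (A - P).PosSemidef := by
  have hPA : P * A = P := by
    have := congrArg Matrix.conjTranspose hfix
    rwa [Matrix.conjTranspose_mul, hA.1.eq, hP.1.eq] at this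
  have key : A - P = (1 - P)ᴴ * A * (1 - P) := by
    rw [Matrix.conjTranspose_sub, Matrix.conjTranspose_one, hP.1.eq]
    rw [sub_mul, one_mul, hPA, mul_sub, mul_one, sub_mul, hfix, hP.2]
    simp
  rw [key]
  exact hA.conjTranspose_mul_mul_same (1 - P)

/-- Largest-projector lemma: if `A` is an effect and `R` is the projector onto
the eigenvalue-1 eigenspace of `A`, then `R` is the largest projector below `A`. -/
private lemma largest_proj {A R : Matrix m m ℂ} (hA : A.PosSemidef)
    (h1A : (1 - A).PosSemidef) (hR : IsProj R)
    (hc : ∀ v, R.mulVec v = v ↔ A.mulVec v = v) :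
    (A - R).PosSemidef ∧ ∀ P, IsProj P → (A - P).PosSemidef → (R - P).PosSemidef := by
  have hAR : A * R = R := by
    apply mulVec_ext'
    intro v
    have h2 : R.mulVec (R.mulVec v) = R.mulVec v := by
      rw [Matrix.mulVec_mulVec, hR.2]
    have := (hc _).mp h2
    rw [Matrix.mulVec_mulVec] at this
    exact this
  refine ⟨proj_le hA hR hAR, ?_⟩
  intro P hP hPA
  have hfixP : ∀ w, P.mulVec w = w → A.mulVec w = w := by
    intro w hw
    have e1 : star w ⬝ᵥ (1 - A).mulVec w = -(star w ⬝ᵥ (A - P).mulVec w) := by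
      rw [Matrix.sub_mulVec, Matrix.sub_mulVec, Matrix.one_mulVec, dotProduct_sub,
        dotProduct_sub, hw]
      ring
    have hq : star w ⬝ᵥ (1 - A).mulVec w = 0 := by
      refine le_antisymm ?_ (h1A.dotProduct_mulVec_nonneg w)
      rw [e1]
      exact neg_nonpos.mpr (hPA.dotProduct_mulVec_nonneg w)
    have hz := (h1A.dotProduct_mulVec_zero_iff w).mp hq
    rw [Matrix.sub_mulVec, Matrix.one_mulVec, sub_eq_zero] at hz
    exact hz.symm
  have hRP : R * P = P := by
    apply mulVec_ext'
    intro v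
    have hPv : P.mulVec (P.mulVec v) = P.mulVec v := by
      rw [Matrix.mulVec_mulVec, hP.2]
    have := (hc _).mpr (hfixP _ hPv)
    rw [← Matrix.mulVec_mulVec]
    exact this
  exact proj_le (proj_psd hR) hP hRP

end Helpers

section AdjHelpers

variable {n : ℕ} {E E' : Matrix (Fin n) (Fin n) ℂ → Matrix (Fin n) (Fin n) ℂ}

private lemma cp_pos (hΦ : IsCP E) {A : Matrix (Fin n) (Fin n) ℂ} (hA : A.PosSemidef) :
    (E A).PosSemidef := by
  have hB : (A.submatrix (Prod.snd : Fin 1 × Fin n → Fin n) Prod.snd).PosSemidef :=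
    hA.submatrix _
  have h1 := hΦ 1 _ hB
  have key : E A = (tensorMap E 1 (A.submatrix Prod.snd Prod.snd)).submatrix
      (fun i : Fin n => ((0 : Fin 1), i)) (fun i : Fin n => ((0 : Fin 1), i)) := by
    ext p q
    show E A p q = E (Matrix.of fun a b => A.submatrix Prod.snd Prod.snd ((0,a)) ((0,b))) p q
    congr 1
  rw [key]
  exact h1.submatrix _

private lemma adj_quad (hadj : ∀ A B : Matrix (Fin n) (Fin n) ℂ,
      (E A * B).trace = (A * E' B).trace)
    (B : Matrix (Fin n) (Fin n) ℂ) (w : Fin n → ℂ) :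
    star w ⬝ᵥ (E' B).mulVec w = (E (outer w) * B).trace := by
  rw [← trace_mul_outer, Matrix.trace_mul_comm, ← hadj]

private lemma adj_psd (hCP : IsCP E)
    (hadj : ∀ A B : Matrix (Fin n) (Fin n) ℂ, (E A * B).trace = (A * E' B).trace)
    {B : Matrix (Fin n) (Fin n) ℂ} (hB : B.PosSemidef) : (E' B).PosSemidef := by
  apply psd_of_forall
  intro w
  rw [adj_quad hadj]
  exact trace_mul_psd_nonneg (cp_pos hCP (outer_psd w)) hB

private lemma adj_effect (hCP : IsCP E) (hTNI : IsTNI E)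
    (hadj : ∀ A B : Matrix (Fin n) (Fin n) ℂ, (E A * B).trace = (A * E' B).trace)
    {Q : Matrix (Fin n) (Fin n) ℂ} (hQ : IsProj Q) :
    (E' Q).PosSemidef ∧ (1 - E' Q).PosSemidef := by
  refine ⟨adj_psd hCP hadj (proj_psd hQ), psd_of_forall _ fun v => ?_⟩
  have hEo : (E (outer v)).PosSemidef := cp_pos hCP (outer_psd v)
  set t1 : ℂ := (E (outer v) * Q).trace with ht1
  set t2 : ℂ := (E (outer v)).trace with ht2
  set t3 : ℂ := star v ⬝ᵥ v with ht3
  have hq : star v ⬝ᵥ (1 - E' Q).mulVec v = t3 - t1 := by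
    rw [Matrix.sub_mulVec, Matrix.one_mulVec, dotProduct_sub, adj_quad hadj]
  rw [hq]
  have h01 : 0 ≤ t1 := trace_mul_psd_nonneg hEo (proj_psd hQ)
  have h12 : 0 ≤ t2 - t1 := by
    have := trace_mul_psd_nonneg hEo (proj_psd (proj_compl hQ))
    rwa [Matrix.mul_sub, Matrix.mul_one, Matrix.trace_sub] at this
  have h02 : 0 ≤ t2 := by
    have := trace_mul_psd_nonneg hEo Matrix.PosSemidef.one
    rwa [Matrix.mul_one] at this
  have h03 : 0 ≤ t3 := dotProduct_star_self_nonneg v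
  have h23 : t2.re ≤ t3.re := by
    have := hTNI (outer v) (outer_psd v)
    rwa [trace_outer] at this
  rw [Complex.le_def] at h01 h12 h02 h03 ⊢
  simp only [Complex.zero_re, Complex.zero_im, Complex.sub_re, Complex.sub_im] at *
  constructor
  · linarith [h12.1, h23]
  · linarith [h01.2, h03.2, h12.2, h02.2]

end AdjHelpers

theorem projector_transformers {n : ℕ}
    (E E' : Matrix (Fin n) (Fin n) ℂ → Matrix (Fin n) (Fin n) ℂ)
    (hE : IsCPTN E) (hE'l : IsLinearMap ℂ E')
    (hadj : ∀ A B : Matrix (Fin n) (Fin n) ℂ, (E A * B).trace = (A * E' B).trace)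
    (Q : Matrix (Fin n) (Fin n) ℂ) (hQ : IsProj Q)
    -- `R1` is the projector onto the eigenvalue-1 eigenspace of `E†(Q)`
    (R1 : Matrix (Fin n) (Fin n) ℂ) (hR1 : IsProj R1)
    (hR1c : ∀ v : Fin n → ℂ, R1.mulVec v = v ↔ (E' Q).mulVec v = v)
    -- `R2` is the projector onto the kernel of `E†(Q⊥)`
    (R2 : Matrix (Fin n) (Fin n) ℂ) (hR2 : IsProj R2)
    (hR2c : ∀ v : Fin n → ℂ, R2.mulVec v = v ↔ (E' (1 - Q)).mulVec v = 0)
    -- `R3` is the projector onto the support of `E(Q)`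
    (R3 : Matrix (Fin n) (Fin n) ℂ) (hR3 : IsProj R3)
    (hR3c : ∀ v : Fin n → ℂ, R3.mulVec v = 0 ↔ (E Q).mulVec v = 0) :
    -- `R1` is the largest projector below `E†(Q)`
    (Loewner R1 (E' Q) ∧
      ∀ P : Matrix (Fin n) (Fin n) ℂ, IsProj P → Loewner P (E' Q) → Loewner P R1) ∧
    -- `R2` is the largest projector below `I - E†(I - Q)`
    (Loewner R2 (1 - E' (1 - Q)) ∧
      ∀ P : Matrix (Fin n) (Fin n) ℂ, IsProj P → Loewner P (1 - E' (1 - Q)) → Loewner P R2) ∧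
    -- `R3` is the smallest projector containing `supp(E(ρ))` for all densities `ρ` with support in `Q`
    ((∀ ρ : Matrix (Fin n) (Fin n) ℂ, IsDensity ρ → Q * ρ = ρ → R3 * E ρ = E ρ) ∧
      ∀ S : Matrix (Fin n) (Fin n) ℂ, IsProj S →
        (∀ ρ : Matrix (Fin n) (Fin n) ℂ, IsDensity ρ → Q * ρ = ρ → S * E ρ = E ρ) →
        Loewner R3 S) := by
  obtain ⟨hEl, hECP, hETNI⟩ := hE
  refine ⟨?_, ?_, ?_, ?_⟩
  · -- Part 1
    have eff := adj_effect hECP hETNI hadj hQ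
    have h := largest_proj eff.1 eff.2 hR1 hR1c
    exact ⟨h.1, fun P hP hL => h.2 P hP hL⟩
  · -- Part 2
    have hQ' := proj_compl hQ
    have eff := adj_effect hECP hETNI hadj hQ'
    have h1A : (1 - (1 - E' (1 - Q))).PosSemidef := by
      rw [sub_sub_cancel]; exact eff.1
    have hc : ∀ v, R2.mulVec v = v ↔ (1 - E' (1 - Q)).mulVec v = v := by
      intro v
      rw [hR2c, Matrix.sub_mulVec, Matrix.one_mulVec]
      constructor
      · intro h; rw [h, sub_zero]
      · intro h; exact sub_eq_self.mp h
    have h := largest_proj eff.2 h1A hR2 hc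
    exact ⟨h.1, fun P hP hL => h.2 P hP hL⟩
  · -- Part 3a
    intro ρ hρ hQρ
    have hρQ : ρ * Q = ρ := by
      have h0 := congrArg Matrix.conjTranspose hQρ
      rwa [Matrix.conjTranspose_mul, hρ.1.1.eq, hQ.1.eq] at h0
    have hρ2 : ρ = Q * (ρ * Q) := by rw [hρQ, hQρ]
    have hEρ : (E ρ).PosSemidef := cp_pos hECP hρ.1
    have hkey : ∀ w, (E Q).mulVec w = 0 → (E ρ).mulVec w = 0 := by
      intro w hw
      set N := E' (outer w) with hN
      have hNpsd : N.PosSemidef := adj_psd hECP hadj (outer_psd w)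
      have hQN : (Q * N).trace = 0 := by
        rw [hN, ← hadj, trace_mul_outer, hw, dotProduct_zero]
      have hQNQ : Q * N * Q = 0 := by
        apply psd_trace_eq_zero
        · have h2 := hNpsd.mul_mul_conjTranspose_same Q
          rwa [hQ.1.eq] at h2
        · rw [Matrix.trace_mul_cycle, hQ.2]
          exact hQN
      have h5 : (ρ * N).trace = (ρ * (Q * N * Q)).trace := by
        conv_lhs => rw [hρ2]
        rw [Matrix.mul_assoc Q (ρ * Q) N, Matrix.trace_mul_comm,
          Matrix.mul_assoc (ρ * Q) N Q, Matrix.mul_assoc ρ Q (N * Q),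
          ← Matrix.mul_assoc Q N Q]
      have hq0 : star w ⬝ᵥ (E ρ).mulVec w = 0 := by
        rw [← trace_mul_outer, hadj, ← hN, h5, hQNQ, Matrix.mul_zero, Matrix.trace_zero]
      exact (hEρ.dotProduct_mulVec_zero_iff w).mp hq0
    have hM0 : E ρ * (1 - R3) = 0 := by
      apply mulVec_ext'
      intro v
      rw [← Matrix.mulVec_mulVec, Matrix.zero_mulVec]
      apply hkey
      apply (hR3c _).mp
      rw [Matrix.mulVec_mulVec]
      have h6 : R3 * (1 - R3) = 0 := by rw [mul_sub, mul_one, hR3.2, sub_self]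
      rw [h6, Matrix.zero_mulVec]
    have hM0' : (1 - R3) * E ρ = 0 := by
      have h7 := congrArg Matrix.conjTranspose hM0
      rwa [Matrix.conjTranspose_mul, hEρ.1.eq, (proj_compl hR3).1.eq,
        Matrix.conjTranspose_zero] at h7
    rw [sub_mul, one_mul, sub_eq_zero] at hM0'
    exact hM0'.symm
  · -- Part 3b
    intro S hS hSsupp
    set c : ℂ := ((((n : ℝ) + 1)⁻¹ : ℝ) : ℂ) with hc
    have hcpos : (0:ℝ) < ((n : ℝ) + 1)⁻¹ := by positivity
    have hψ : IsDensity (c • Q) := by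
      constructor
      · refine Matrix.PosSemidef.of_dotProduct_mulVec_nonneg ?_ ?_
        · show (c • Q)ᴴ = c • Q
          rw [Matrix.conjTranspose_smul, hc, Complex.star_def, Complex.conj_ofReal, hQ.1.eq]
        · intro v
          rw [Matrix.smul_mulVec, dotProduct_smul, smul_eq_mul]
          exact mul_nonneg (by rw [hc]; exact Complex.zero_le_real.mpr hcpos.le)
            ((proj_psd hQ).dotProduct_mulVec_nonneg v)
      · have hQtr : Q.trace.re ≤ n := by
          have hsum : Q.trace.re = ∑ i, (Q i i).re := by
            rw [Matrix.trace, Complex.re_sum]; rfl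
          rw [hsum]
          have hb : ∀ i ∈ (Finset.univ : Finset (Fin n)), (Q i i).re ≤ 1 := by
            intro i _
            have h8 := psd_diag_nonneg (proj_psd (proj_compl hQ)) i
            rw [Complex.le_def] at h8
            have h9 : ((1 - Q : Matrix (Fin n) (Fin n) ℂ) i i).re = 1 - (Q i i).re := by
              simp [Matrix.sub_apply, Matrix.one_apply_eq]
            rw [h9] at h8
            have h8' := h8.1
            norm_num at h8'
            linarith
          calc ∑ i, (Q i i).re ≤ ∑ _i : Fin n, (1:ℝ) := Finset.sum_le_sum hb
            _ = n := by simp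
        rw [Matrix.trace_smul, hc, smul_eq_mul, Complex.re_ofReal_mul]
        have h10 : ((n:ℝ) + 1)⁻¹ * Q.trace.re ≤ ((n:ℝ) + 1)⁻¹ * n :=
          mul_le_mul_of_nonneg_left hQtr hcpos.le
        have h11 : ((n:ℝ) + 1)⁻¹ * n ≤ 1 := by
          rw [inv_mul_le_iff₀ (by positivity)]
          linarith
        linarith
    have hQc : Q * (c • Q) = c • Q := by rw [mul_smul_comm, hQ.2]
    have h1 := hSsupp (c • Q) hψ hQc
    rw [hEl.map_smul, mul_smul_comm] at h1
    have hcne : c ≠ 0 := by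
      rw [hc]
      exact Complex.ofReal_ne_zero.mpr (ne_of_gt hcpos)
    have hSEQ : S * E Q = E Q := smul_right_injective _ hcne h1
    have hEQh : (E Q).IsHermitian := (cp_pos hECP (proj_psd hQ)).1
    have hEQ1 : E Q * (1 - S) = 0 := by
      have h2 : (1 - S) * E Q = 0 := by rw [sub_mul, one_mul, hSEQ, sub_self]
      have h3 := congrArg Matrix.conjTranspose h2
      rwa [Matrix.conjTranspose_mul, hEQh.eq, (proj_compl hS).1.eq,
        Matrix.conjTranspose_zero] at h3
    have hR3S : R3 * (1 - S) = 0 := by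
      apply mulVec_ext'
      intro v
      rw [← Matrix.mulVec_mulVec, Matrix.zero_mulVec]
      apply (hR3c _).mpr
      rw [Matrix.mulVec_mulVec, hEQ1, Matrix.zero_mulVec]
    have hSR3 : S * R3 = R3 := by
      rw [mul_sub, mul_one, sub_eq_zero] at hR3S
      have h4 := congrArg Matrix.conjTranspose hR3S
      rw [Matrix.conjTranspose_mul, hR3.1.eq, hS.1.eq] at h4
      exact h4.symm
    exact proj_le (proj_psd hS) hR3 hSR3
end
end

section
/- Let E be a CPTN super-operator on L(H), and define for projectors Q: wp(Q) = E(E†(Q)) (the eigenvalue-1 eigenspace of E†(Q)), wlp(Q) = ker(E†(Q⊥)), and T = wp(I). Then for every projector Q, wp(Q) = wlp(Q) ∧ T, where ∧ is intersection of subspaces. -/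
open Matrix
open scoped ComplexOrder

noncomputable section

section WpAux


variable {n : ℕ}

/-- diagonal entries of a PSD matrix are nonneg. -/
lemma diag_nonneg {A : Matrix (Fin n) (Fin n) ℂ} (hA : A.PosSemidef) (i : Fin n) :
    0 ≤ A i i := by
  have := hA.dotProduct_mulVec_nonneg (Pi.single i 1)
  simpa [dotProduct, Matrix.mulVec, Pi.single_apply] using this

lemma trace_nonneg {A : Matrix (Fin n) (Fin n) ℂ} (hA : A.PosSemidef) :
    0 ≤ A.trace := by
  rw [Matrix.trace]
  exact Finset.sum_nonneg fun i _ => diag_nonneg hA i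

open scoped MatrixOrder in
lemma trace_mul_nonneg {P M : Matrix (Fin n) (Fin n) ℂ} (hP : P.PosSemidef)
    (hM : M.PosSemidef) : 0 ≤ (P * M).trace := by
  obtain ⟨B, rfl⟩ := CStarAlgebra.nonneg_iff_eq_star_mul_self.mp hP.nonneg
  rw [Matrix.mul_assoc, Matrix.trace_mul_comm]
  exact trace_nonneg (hM.mul_mul_conjTranspose_same B)

/-- a matrix with nonneg quadratic form is PSD. -/
lemma psd_of_form {A : Matrix (Fin n) (Fin n) ℂ}
    (h : ∀ x : Fin n → ℂ, 0 ≤ star x ⬝ᵥ A *ᵥ x) : A.PosSemidef := by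
  refine .of_dotProduct_mulVec_nonneg ?_ h
  rw [Matrix.isHermitian_iff_isSymmetric, LinearMap.isSymmetric_iff_inner_map_self_real]
  intro v
  have key : ((toEuclideanLin A) v : EuclideanSpace ℂ (Fin n)) =
      (WithLp.equiv 2 (Fin n → ℂ)).symm (A *ᵥ (WithLp.equiv 2 (Fin n → ℂ)) v) :=
    Matrix.toEuclideanLin_apply A v
  set w : Fin n → ℂ := (WithLp.equiv 2 (Fin n → ℂ)) v with hw
  have hz : 0 ≤ star w ⬝ᵥ A *ᵥ w := h w
  have him : (star w ⬝ᵥ A *ᵥ w).im = 0 := by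
    have := (Complex.le_def.mp hz).2
    simpa using this.symm
  have hconj : (starRingEnd ℂ) (star w ⬝ᵥ A *ᵥ w) = star w ⬝ᵥ A *ᵥ w :=
    Complex.conj_eq_iff_im.mpr him
  have hinner : (inner ℂ ((toEuclideanLin A) v) v : ℂ) = (starRingEnd ℂ) (star w ⬝ᵥ A *ᵥ w) := by
    rw [key, EuclideanSpace.inner_eq_star_dotProduct]
    show w ⬝ᵥ star (A *ᵥ w) = star (star w ⬝ᵥ A *ᵥ w)
    rw [dotProduct_comm, Matrix.star_dotProduct]
  rw [hinner, hconj]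
  exact hconj


/-- outer product `v v†`. -/
def vvStar (v : Fin n → ℂ) : Matrix (Fin n) (Fin n) ℂ :=
  Matrix.of fun i j => v i * star (v j)

lemma vvStar_psd (v : Fin n → ℂ) : (vvStar v).PosSemidef := by
  have : vvStar v = (Matrix.of fun (_ : Fin 1) j => star (v j))ᴴ *
      (Matrix.of fun (_ : Fin 1) j => star (v j)) := by
    ext i j
    simp [vvStar, Matrix.mul_apply, Matrix.conjTranspose_apply, Fin.sum_univ_one]
  rw [this]
  exact Matrix.posSemidef_conjTranspose_mul_self _

lemma trace_vvStar_mul (v : Fin n → ℂ) (C : Matrix (Fin n) (Fin n) ℂ) :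
    (vvStar v * C).trace = star v ⬝ᵥ C *ᵥ v := by
  simp only [Matrix.trace, Matrix.diag, Matrix.mul_apply, vvStar, Matrix.of_apply,
    dotProduct, Matrix.mulVec, Pi.star_apply]
  rw [Finset.sum_comm]
  congr 1
  ext j
  rw [Finset.mul_sum]
  congr 1
  ext i
  ring

lemma trace_vvStar (v : Fin n → ℂ) : (vvStar v).trace = star v ⬝ᵥ v := by
  simp [vvStar, Matrix.trace, Matrix.diag, dotProduct, mul_comm]

/-- a CP map preserves positive semidefiniteness. -/
lemma cp_psd {E : Matrix (Fin n) (Fin n) ℂ → Matrix (Fin n) (Fin n) ℂ}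
    (hCP : IsCP E) {M : Matrix (Fin n) (Fin n) ℂ} (hM : M.PosSemidef) :
    (E M).PosSemidef := by
  have h1 := hCP 1 (M.submatrix Prod.snd Prod.snd) (hM.submatrix _)
  have h2 : tensorMap E 1 (M.submatrix Prod.snd Prod.snd) =
      (E M).submatrix Prod.snd Prod.snd := rfl
  rw [h2] at h1
  have h3 := h1.submatrix (fun i : Fin n => (((0 : Fin 1), i) : Fin 1 × Fin n))
  have h4 : ((E M).submatrix Prod.snd Prod.snd).submatrix
      (fun i : Fin n => (((0 : Fin 1), i) : Fin 1 × Fin n))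
      (fun i : Fin n => (((0 : Fin 1), i) : Fin 1 × Fin n)) = E M := rfl
  rwa [h4] at h3

end WpAux
theorem wp_eq_wlp_inter_termination {n : ℕ}
    (E E' : Matrix (Fin n) (Fin n) ℂ → Matrix (Fin n) (Fin n) ℂ)
    (hE : IsCPTN E) (hE'l : IsLinearMap ℂ E')
    (hadj : ∀ A B : Matrix (Fin n) (Fin n) ℂ, (E A * B).trace = (A * E' B).trace)
    (Q : Matrix (Fin n) (Fin n) ℂ) (hQ : IsProj Q) :
    {v : Fin n → ℂ | (E' Q).mulVec v = v} =
      {v : Fin n → ℂ | (E' (1 - Q)).mulVec v = 0} ∩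
        {v : Fin n → ℂ | (E' 1).mulVec v = v} := by

  obtain ⟨hlin, hCP, hTNI⟩ := hE
  have hkey : ∀ (v : Fin n → ℂ) (M : Matrix (Fin n) (Fin n) ℂ),
      star v ⬝ᵥ (E' M) *ᵥ v = (E (vvStar v) * M).trace := by
    intro v M
    rw [hadj (vvStar v) M, trace_vvStar_mul]
  have hQpsd : Q.PosSemidef := by
    have : Q = Qᴴ * Q := by rw [hQ.1.eq, hQ.2]
    rw [this]; exact Matrix.posSemidef_conjTranspose_mul_self _
  have h1Q : (1 - Q).PosSemidef := by
    have hherm : (1 - Q).IsHermitian := (Matrix.isHermitian_one).sub hQ.1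
    have hid : (1 - Q) = (1 - Q)ᴴ * (1 - Q) := by
      rw [hherm.eq, mul_sub, mul_one, sub_mul, one_mul, hQ.2]
      abel
    rw [hid]; exact Matrix.posSemidef_conjTranspose_mul_self _
  have hsum : E' 1 = E' Q + E' (1 - Q) := by
    rw [← hE'l.map_add, show Q + (1 - Q) = (1 : Matrix (Fin n) (Fin n) ℂ) from by abel]
  have hform : ∀ x : Fin n → ℂ, 0 ≤ star x ⬝ᵥ (E' (1 - Q)) *ᵥ x := by
    intro x
    rw [hkey]
    exact trace_mul_nonneg (cp_psd hCP (vvStar_psd x)) h1Q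
  have hApsd : (E' (1 - Q)).PosSemidef := psd_of_form hform
  ext v
  simp only [Set.mem_setOf_eq, Set.mem_inter_iff]
  constructor
  · intro hv
    have hEP : (E (vvStar v)).PosSemidef := cp_psd hCP (vvStar_psd v)
    have ha : (0:ℂ) ≤ (E (vvStar v)).trace := trace_nonneg hEP
    have hb : (0:ℂ) ≤ (vvStar v).trace := trace_nonneg (vvStar_psd v)
    have hre : (E (vvStar v)).trace.re ≤ (vvStar v).trace.re := hTNI _ (vvStar_psd v)
    have hle : (E (vvStar v)).trace ≤ (vvStar v).trace := by
      rw [Complex.le_def]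
      refine ⟨hre, ?_⟩
      have h1 := (Complex.le_def.mp ha).2
      have h2 := (Complex.le_def.mp hb).2
      simp only [Complex.zero_im] at h1 h2
      rw [← h1, ← h2]
    have hc : star v ⬝ᵥ (E' (1 - Q)) *ᵥ v = (E (vvStar v)).trace - (vvStar v).trace := by
      have h1 : star v ⬝ᵥ (E' 1) *ᵥ v = (E (vvStar v)).trace := by
        rw [hkey, mul_one]
      have h2 : (E' (1 - Q)) *ᵥ v = (E' 1) *ᵥ v - v := by
        rw [hsum, Matrix.add_mulVec, hv]
        abel
      rw [h2, dotProduct_sub, h1, trace_vvStar v]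
    have hzero : star v ⬝ᵥ (E' (1 - Q)) *ᵥ v = 0 :=
      le_antisymm (by rw [hc]; simpa using hle) (hform v)
    have hker : (E' (1 - Q)) *ᵥ v = 0 := (hApsd.dotProduct_mulVec_zero_iff v).mp hzero
    refine ⟨hker, ?_⟩
    rw [hsum, Matrix.add_mulVec, hv, hker, add_zero]
  · rintro ⟨h1, h2⟩
    have : (E' Q) *ᵥ v = (E' 1) *ᵥ v - (E' (1 - Q)) *ᵥ v := by
      rw [hsum, Matrix.add_mulVec]
      abel
    rw [this, h1, h2, sub_zero]
end
end
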